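/- For fixed σv, σu > 0, the second derivative of the privacy subsidy S(σε) = σv·σε²/(2·√(σu² + σε²)) with respect to σε equals σv·σu²·(2σu² − σε²)/(2·(σu² + σε²)^(5/2)); hence S is strictly convex on (0, √2·σu) and strictly concave on (√2·σu, ∞), with a unique inflection point at σε = √2·σu. -/

import Mathlib

/-- Second derivative of the privacy subsidy; convex-then-concave with a unique
inflection at σε = √2·σu. -/
theorem stmt_9 (σv σu : ℝ) (hv : 0 < σv) (hu : 0 < σu) :
    (∀ σε : ℝ, 0 < σε →
      HasDerivAt
        (deriv (fun s : ℝ => σv * s ^ 2 / (2 * Real.sqrt (σu ^ 2 + s ^ 2))))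
        (σv * σu ^ 2 * (2 * σu ^ 2 - σε ^ 2) / (2 * (σu ^ 2 + σε ^ 2) ^ ((5 : ℝ) / 2)))
        σε) ∧
    StrictConvexOn ℝ (Set.Ioo (0 : ℝ) (Real.sqrt 2 * σu))
      (fun s : ℝ => σv * s ^ 2 / (2 * Real.sqrt (σu ^ 2 + s ^ 2))) ∧
    StrictConcaveOn ℝ (Set.Ioi (Real.sqrt 2 * σu))
      (fun s : ℝ => σv * s ^ 2 / (2 * Real.sqrt (σu ^ 2 + s ^ 2))) ∧
    ∀ σε : ℝ, 0 < σε →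
      (deriv (deriv (fun s : ℝ => σv * s ^ 2 / (2 * Real.sqrt (σu ^ 2 + s ^ 2)))) σε = 0
        ↔ σε = Real.sqrt 2 * σu) := by
  set F : ℝ → ℝ := fun s : ℝ => σv * s ^ 2 / (2 * Real.sqrt (σu ^ 2 + s ^ 2)) with hF
  set D1 : ℝ → ℝ := fun s : ℝ =>
    σv * s * (2 * σu ^ 2 + s ^ 2) / (2 * (σu ^ 2 + s ^ 2) * Real.sqrt (σu ^ 2 + s ^ 2)) with hD1
  set D2 : ℝ → ℝ := fun s : ℝ =>
    σv * σu ^ 2 * (2 * σu ^ 2 - s ^ 2) /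
      (2 * (σu ^ 2 + s ^ 2) ^ 2 * Real.sqrt (σu ^ 2 + s ^ 2)) with hD2
  have hQ : ∀ s : ℝ, 0 < σu ^ 2 + s ^ 2 := fun s => by positivity
  have hr : ∀ s : ℝ, 0 < Real.sqrt (σu ^ 2 + s ^ 2) := fun s => Real.sqrt_pos.2 (hQ s)
  have hr2 : ∀ s : ℝ, Real.sqrt (σu ^ 2 + s ^ 2) ^ 2 = σu ^ 2 + s ^ 2 :=
    fun s => Real.sq_sqrt (hQ s).le
  -- first derivative
  have hd1 : ∀ s : ℝ, HasDerivAt F (D1 s) s := by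
    intro s
    have hnum : HasDerivAt (fun x : ℝ => σv * x ^ 2) (σv * (2 * s)) s := by
      simpa using (hasDerivAt_pow 2 s).const_mul σv
    have hin : HasDerivAt (fun x : ℝ => σu ^ 2 + x ^ 2) (2 * s) s := by
      simpa using (hasDerivAt_pow 2 s).const_add (σu ^ 2)
    have hsq : HasDerivAt (fun x : ℝ => Real.sqrt (σu ^ 2 + x ^ 2))
        (2 * s / (2 * Real.sqrt (σu ^ 2 + s ^ 2))) s := hin.sqrt (hQ s).ne'
    have hden : HasDerivAt (fun x : ℝ => 2 * Real.sqrt (σu ^ 2 + x ^ 2))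
        (2 * (2 * s / (2 * Real.sqrt (σu ^ 2 + s ^ 2)))) s := hsq.const_mul 2
    have h := hnum.fun_div hden (by positivity)
    refine h.congr_deriv (Eq.symm ?_)
    have h2 := hr2 s
    have hne := (hr s).ne'
    simp only [hD1]
    field_simp
    linear_combination (-s^3) * h2
  have hdF : deriv F = D1 := funext fun s => (hd1 s).deriv
  -- second derivative
  have hd2 : ∀ s : ℝ, HasDerivAt D1 (D2 s) s := by
    intro s
    have hnum : HasDerivAt (fun x : ℝ => σv * x * (2 * σu ^ 2 + x ^ 2))
        (σv * (2 * σu ^ 2 + s ^ 2) + σv * s * (2 * s)) s := by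
      have h1 : HasDerivAt (fun x : ℝ => σv * x) σv s := by
        simpa using (hasDerivAt_id s).const_mul σv
      have h2 : HasDerivAt (fun x : ℝ => 2 * σu ^ 2 + x ^ 2) (2 * s) s := by
        simpa using (hasDerivAt_pow 2 s).const_add (2 * σu ^ 2)
      exact h1.mul h2
    have hin : HasDerivAt (fun x : ℝ => σu ^ 2 + x ^ 2) (2 * s) s := by
      simpa using (hasDerivAt_pow 2 s).const_add (σu ^ 2)
    have hsq : HasDerivAt (fun x : ℝ => Real.sqrt (σu ^ 2 + x ^ 2))
        (2 * s / (2 * Real.sqrt (σu ^ 2 + s ^ 2))) s := hin.sqrt (hQ s).ne'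
    have hden : HasDerivAt (fun x : ℝ => 2 * (σu ^ 2 + x ^ 2) * Real.sqrt (σu ^ 2 + x ^ 2))
        ((2 * (2 * s)) * Real.sqrt (σu ^ 2 + s ^ 2)
          + 2 * (σu ^ 2 + s ^ 2) * (2 * s / (2 * Real.sqrt (σu ^ 2 + s ^ 2)))) s := by
      exact (hin.const_mul 2).mul hsq
    have h := hnum.fun_div hden (by positivity)
    refine h.congr_deriv (Eq.symm ?_)
    have h2 := hr2 s
    have hne := (hr s).ne'
    simp only [hD2]
    field_simp
    linear_combination (-s^2*(2*σu^2+s^2)) * h2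
  have hdD1 : deriv D1 = D2 := funext fun s => (hd2 s).deriv
  -- D2 equals the rpow form
  have hrpow : ∀ s : ℝ, (σu ^ 2 + s ^ 2) ^ ((5 : ℝ) / 2)
      = (σu ^ 2 + s ^ 2) ^ 2 * Real.sqrt (σu ^ 2 + s ^ 2) := by
    intro s
    rw [show ((5 : ℝ) / 2) = (2 : ℕ) + (1 / 2 : ℝ) by norm_num,
      Real.rpow_add (hQ s), Real.rpow_natCast, Real.sqrt_eq_rpow]
  have hD2eq : ∀ s : ℝ,
      σv * σu ^ 2 * (2 * σu ^ 2 - s ^ 2) / (2 * (σu ^ 2 + s ^ 2) ^ ((5 : ℝ) / 2)) = D2 s := by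
    intro s
    rw [hrpow s, hD2]
    ring_nf
  -- second derivative values
  have hderiv2 : ∀ s : ℝ, deriv (deriv F) s = D2 s := by
    intro s; rw [hdF, hdD1]
  refine ⟨fun σε _ => ?_, ?_, ?_, fun σε hε => ?_⟩
  · rw [hdF, hD2eq σε]; exact hd2 σε
  · -- strict convexity
    apply strictConvexOn_of_deriv2_pos (convex_Ioo _ _)
      (fun s _ => ((hd1 s).continuousAt).continuousWithinAt)
    intro x hx
    rw [interior_Ioo] at hx
    have hx1 : 0 < x := hx.1
    have hx2 : x < Real.sqrt 2 * σu := hx.2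
    have hiter : deriv^[2] F x = D2 x := by
      simp only [Function.iterate_succ, Function.iterate_zero, Function.comp_apply, id_eq]
      exact hderiv2 x
    rw [hiter]; simp only [hD2]
    have hx2sq : x ^ 2 < 2 * σu ^ 2 := by
      have h2 : (Real.sqrt 2 * σu) ^ 2 = 2 * σu ^ 2 := by
        rw [mul_pow, Real.sq_sqrt (by norm_num : (0:ℝ) ≤ 2)]
      calc x ^ 2 < (Real.sqrt 2 * σu) ^ 2 := by
            exact pow_lt_pow_left₀ hx2 hx1.le two_ne_zero
        _ = 2 * σu ^ 2 := h2
    have : 0 < 2 * σu ^ 2 - x ^ 2 := by linarith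
    positivity
  · -- strict concavity
    apply strictConcaveOn_of_deriv2_neg (convex_Ioi _)
      (fun s _ => ((hd1 s).continuousAt).continuousWithinAt)
    intro x hx
    rw [interior_Ioi] at hx
    have hx0 : 0 < x := lt_trans (by positivity) hx
    have hx2sq : 2 * σu ^ 2 < x ^ 2 := by
      have h2 : (Real.sqrt 2 * σu) ^ 2 = 2 * σu ^ 2 := by
        rw [mul_pow, Real.sq_sqrt (by norm_num : (0:ℝ) ≤ 2)]
      calc 2 * σu ^ 2 = (Real.sqrt 2 * σu) ^ 2 := h2.symm
        _ < x ^ 2 := pow_lt_pow_left₀ hx (by positivity) two_ne_zero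
    have hiter : deriv^[2] F x = D2 x := by
      simp only [Function.iterate_succ, Function.iterate_zero, Function.comp_apply, id_eq]
      exact hderiv2 x
    rw [hiter]; simp only [hD2]
    apply div_neg_of_neg_of_pos
    · nlinarith [mul_pos hv (pow_pos hu 2)]
    · positivity
  · rw [hderiv2 σε]; simp only [hD2]
    constructor
    · intro h
      have hden : (2 * (σu ^ 2 + σε ^ 2) ^ 2 * Real.sqrt (σu ^ 2 + σε ^ 2)) ≠ 0 := by
        positivity
      have hnum : σv * σu ^ 2 * (2 * σu ^ 2 - σε ^ 2) = 0 :=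
        (div_eq_zero_iff.1 h).resolve_right hden
      have h0 : 2 * σu ^ 2 - σε ^ 2 = 0 := by
        by_contra hc
        exact (mul_ne_zero (mul_ne_zero hv.ne' (pow_ne_zero 2 hu.ne')) hc) hnum
      have hsqeq : σε ^ 2 = 2 * σu ^ 2 := by linarith
      have : σε = Real.sqrt (2 * σu ^ 2) := by
        rw [← hsqeq, Real.sqrt_sq hε.le]
      rw [this, Real.sqrt_mul (by norm_num), Real.sqrt_sq hu.le]
    · intro h
      have h2 : σε ^ 2 = 2 * σu ^ 2 := by
        rw [h, mul_pow, Real.sq_sqrt (by norm_num : (0:ℝ) ≤ 2)]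
      rw [show 2 * σu ^ 2 - σε ^ 2 = 0 by rw [h2]; ring, mul_zero, zero_div]
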